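/- With g as above, g(s,v) → −∞ as s + |v| → ∞ (with s ≥ 0); more precisely, there exist A > 0 and C such that g(s,v) ≤ −(1/2)s² f(u)u + s f(u)(su+v) − A(su+v)² + C for all s ≥ 0, v ∈ ℝ, and the quadratic form (s,z) ↦ −(1/2)s² f(u)u + s f(u) z − A z² is negative definite for A sufficiently large. -/

import Mathlib

open Filter

theorem stmt_3 (f : ℝ → ℝ) (hf : Continuous f)
    (hmono_pos : ∀ s t : ℝ, 0 < s → s ≤ t → f s / s ≤ f t / t)
    (hmono_neg : ∀ s t : ℝ, s ≤ t → t < 0 → f s / |s| ≤ f t / |t|)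
    (hsmall : Tendsto (fun t => f t / t) (nhdsWithin 0 {(0:ℝ)}ᶜ) (nhds 0))
    (hsuper : Tendsto (fun t => (∫ r in (0:ℝ)..t, f r) / t ^ 2) (cocompact ℝ) atTop)
    (u : ℝ) (hfu : f u ≠ 0) :
    ∃ A > (0:ℝ), ∃ C : ℝ,
      (∀ s v : ℝ, 0 ≤ s →
        f u * ((1/2) * (s ^ 2 - 1) * u + s * v) + (∫ r in (0:ℝ)..u, f r)
          - (∫ r in (0:ℝ)..(s * u + v), f r)
        ≤ -(1/2) * s ^ 2 * (f u * u) + s * f u * (s * u + v) - A * (s * u + v) ^ 2 + C) ∧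
      (∀ s z : ℝ, (s, z) ≠ (0, 0) →
        -(1/2) * s ^ 2 * (f u * u) + s * f u * z - A * z ^ 2 < 0) := by
  -- F is the primitive of f
  set F : ℝ → ℝ := fun t => ∫ r in (0:ℝ)..t, f r with hF
  have hFcont : Continuous F :=
    intervalIntegral.continuous_primitive (fun a b => hf.intervalIntegrable a b) 0
  -- f 0 = 0
  have hf0 : f 0 = 0 := by
    have h1 : Tendsto f (nhdsWithin 0 {(0:ℝ)}ᶜ) (nhds (f 0)) :=
      (hf.tendsto 0).mono_left nhdsWithin_le_nhds
    have h2 : Tendsto f (nhdsWithin 0 {(0:ℝ)}ᶜ) (nhds 0) := by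
      have : Tendsto (fun t : ℝ => (f t / t) * t) (nhdsWithin 0 {(0:ℝ)}ᶜ) (nhds 0) := by
        have := hsmall.mul (tendsto_id.mono_left (nhdsWithin_le_nhds (s := {(0:ℝ)}ᶜ)))
        simpa using this
      refine this.congr' ?_
      filter_upwards [self_mem_nhdsWithin] with t ht
      have ht' : t ≠ 0 := ht
      field_simp
    haveI : (nhdsWithin (0:ℝ) {(0:ℝ)}ᶜ).NeBot := by infer_instance
    exact tendsto_nhds_unique h1 h2
  have hu0 : u ≠ 0 := by
    rintro rfl; exact hfu hf0
  -- f u * u > 0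
  have ha : 0 < f u * u := by
    rcases lt_or_gt_of_ne hu0 with hu | hu
    · -- u < 0 : show f u < 0
      have hfle : f u / |u| ≤ 0 := by
        by_contra h
        push_neg at h
        have hev : ∀ᶠ t in nhdsWithin (0:ℝ) (Set.Iio 0),
            -(f t / t) < f u / |u| := by
          have hsm : Tendsto (fun t => f t / t) (nhdsWithin 0 (Set.Iio 0)) (nhds 0) :=
            hsmall.mono_left (nhdsWithin_mono 0 (fun x hx => ne_of_lt hx))
          have hsm2 : Tendsto (fun t => -(f t / t)) (nhdsWithin 0 (Set.Iio 0)) (nhds 0) := by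
            simpa using hsm.neg
          exact hsm2.eventually (eventually_lt_nhds h)
        have hmem : Set.Ioo u 0 ∈ nhdsWithin (0:ℝ) (Set.Iio 0) := by
          have : Set.Ioo u (0:ℝ) ∈ nhdsWithin (0:ℝ) (Set.Iio 0) := by
            refine mem_nhdsWithin.2 ⟨Set.Ioi u, isOpen_Ioi, hu, ?_⟩
            rintro x ⟨hx1, hx2⟩; exact ⟨hx1, hx2⟩
          exact this
        haveI : (nhdsWithin (0:ℝ) (Set.Iio 0)).NeBot := by infer_instance
        obtain ⟨t, ht1, ht2⟩ := (hev.and hmem).exists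
        have htneg : t < 0 := ht2.2
        have := hmono_neg u t (le_of_lt ht2.1) htneg
        have habs : |t| = -t := abs_of_neg htneg
        rw [habs, div_neg] at this
        linarith
      have hfuneg : f u < 0 := by
        have habs : |u| = -u := abs_of_neg hu
        rcases lt_trichotomy (f u) 0 with h | h | h
        · exact h
        · exact absurd h hfu
        · exfalso
          have : 0 < f u / |u| := div_pos h (by rw [habs]; linarith)
          linarith
      nlinarith
    · -- u > 0 : show f u > 0
      have hfge : 0 ≤ f u / u := by
        by_contra h
        push_neg at h
        have hev : ∀ᶠ t in nhdsWithin (0:ℝ) (Set.Ioi 0),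
            f u / u < f t / t := by
          have hsm : Tendsto (fun t => f t / t) (nhdsWithin 0 (Set.Ioi 0)) (nhds 0) :=
            hsmall.mono_left (nhdsWithin_mono 0 (fun x hx => ne_of_gt hx))
          exact hsm.eventually (eventually_gt_nhds h)
        have hmem : Set.Ioo (0:ℝ) u ∈ nhdsWithin (0:ℝ) (Set.Ioi 0) :=
          Ioo_mem_nhdsGT_of_mem ⟨le_refl 0, hu⟩
        obtain ⟨t, ht1, ht2⟩ := (hev.and hmem).exists
        have := hmono_pos t u ht2.1 (le_of_lt ht2.2)
        linarith
      have hfupos : 0 < f u := by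
        rcases lt_trichotomy (f u) 0 with h | h | h
        · exfalso
          have : f u / u < 0 := div_neg_of_neg_of_pos h hu
          linarith
        · exact absurd h hfu
        · exact h
      nlinarith
  set a : ℝ := f u * u with haa
  set A : ℝ := f u ^ 2 / a with hA
  have hApos : 0 < A := div_pos (by positivity) ha
  have h2aA : 2 * a * A = 2 * f u ^ 2 := by
    field_simp [hA]
    rw [hA]; field_simp
  -- find M such that A z ^ 2 - F z ≤ M for all z
  obtain ⟨M, hM⟩ : ∃ M : ℝ, ∀ z : ℝ, A * z ^ 2 - F z ≤ M := by
    have hev : ∀ᶠ t in cocompact ℝ, F t / t ^ 2 ≥ A + 1 :=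
      hsuper.eventually (eventually_ge_atTop (A + 1))
    obtain ⟨K, hKc, hK⟩ := (hasBasis_cocompact.eventually_iff).1 hev
    set K' : Set ℝ := K ∪ {0} with hK'
    have hK'c : IsCompact K' := hKc.union isCompact_singleton
    have hK'ne : K'.Nonempty := ⟨0, Or.inr rfl⟩
    obtain ⟨x0, hx0, hx0max⟩ :=
      hK'c.exists_isMaxOn hK'ne
        ((continuous_const.mul (continuous_pow 2)).sub hFcont).continuousOn
    refine ⟨max (A * x0 ^ 2 - F x0) 0, fun z => ?_⟩
    by_cases hz : z ∈ K'
    · exact le_max_of_le_left (hx0max hz)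
    · have hzK : z ∉ K := fun h => hz (Or.inl h)
      have hz0 : z ≠ 0 := fun h => hz (Or.inr h)
      have h1 : F z / z ^ 2 ≥ A + 1 := hK hzK
      have hz2 : 0 < z ^ 2 := by positivity
      have h2 : (A + 1) * z ^ 2 ≤ F z := by
        rw [ge_iff_le, le_div_iff₀ hz2] at h1
        linarith
      have : A * z ^ 2 - F z ≤ -z ^ 2 := by nlinarith
      exact le_max_of_le_right (by nlinarith)
  refine ⟨A, hApos, M + F u, ?_, ?_⟩
  · intro s v hs
    have hz := hM (s * u + v)
    have hFu : (∫ r in (0:ℝ)..u, f r) = F u := rfl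
    have hFz : (∫ r in (0:ℝ)..(s * u + v), f r) = F (s * u + v) := rfl
    rw [hFu, hFz]
    nlinarith [hz]
  · intro s z hsz
    have ha' : a ≠ 0 := ne_of_gt ha
    have hAa : a * A = f u ^ 2 := by
      rw [hA]; field_simp
    have key : 2 * a * (-(1/2) * s ^ 2 * (f u * u) + s * f u * z - A * z ^ 2)
        = -((a * s - f u * z) ^ 2 + f u ^ 2 * z ^ 2) := by
      linear_combination (-2 * z ^ 2) * hAa
    have hne : (a * s - f u * z) ^ 2 + f u ^ 2 * z ^ 2 > 0 := by
      rcases eq_or_ne z 0 with rfl | hz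
      · have hs : s ≠ 0 := by
          intro h; exact hsz (by simp [h])
        have : a * s - f u * 0 ≠ 0 := by
          simp only [mul_zero, sub_zero]
          exact mul_ne_zero (ne_of_gt ha) hs
        nlinarith [sq_pos_of_ne_zero this]
      · have : f u ^ 2 * z ^ 2 > 0 := by positivity
        nlinarith [sq_nonneg (a * s - f u * z)]
    nlinarith [ha, hne, key]
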